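/- Let Γ be a group, S ⊆ Γ, and ρ : Γ → U(n) a map with ρ(e) = 1 and ‖ρ(st) - ρ(s)ρ(t)‖ < δ ≤ 1/2 for all s, t ∈ S. Define ω(a,b) = (1/(2πi))·Tr(log(ρ(a)ρ(b)ρ(ab)⁻¹)). Then for all a, b, c with a, b, c, ab, bc ∈ S, the 2-cocycle identity holds: ω(a,b) + ω(ab,c) = ω(a,bc) + ω(b,c). -/

import Mathlib

open scoped Matrix.Norms.L2Operator

/-- The matrix logarithm defined by the power series centered at `1`. -/
noncomputable def mlog {n : ℕ} (m : Matrix (Fin n) (Fin n) ℂ) : Matrix (Fin n) (Fin n) ℂ :=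
  ∑' k : ℕ, ((-1 : ℂ) ^ k / (k + 1)) • (m - 1) ^ (k + 1)

open scoped Matrix.Norms.L2Operator
open Matrix

namespace LocalCocycle
variable {n : ℕ}

local notation "Mat" => Matrix (Fin n) (Fin n) ℂ

lemma entry_le (A : Mat) (i j : Fin n) : ‖A i j‖ ≤ ‖A‖ := by
  classical
  have h := A.l2_opNorm_mulVec (EuclideanSpace.single j 1)
  rw [EuclideanSpace.norm_single, norm_one, mul_one] at h
  refine le_trans ?_ h
  set y : EuclideanSpace ℂ (Fin n) :=
    (EuclideanSpace.equiv (Fin n) ℂ).symm (A.mulVec (EuclideanSpace.single j 1)) with hy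
  have hyi : y i = A i j := by
    simp [hy, Matrix.mulVec, dotProduct, EuclideanSpace.single_apply, mul_comm]
  calc ‖A i j‖ = ‖y i‖ := by rw [hyi]
    _ ≤ ‖y‖ := by
        rw [EuclideanSpace.norm_eq]
        refine (Real.le_sqrt (norm_nonneg _) (Finset.sum_nonneg fun k _ => sq_nonneg _)).mpr ?_
        exact Finset.single_le_sum (f := fun k => ‖y k‖ ^ 2) (fun k _ => sq_nonneg _)
          (Finset.mem_univ i)

lemma trace_le (A : Mat) : ‖A.trace‖ ≤ n * ‖A‖ := by
  calc ‖A.trace‖ ≤ ∑ i : Fin n, ‖A i i‖ := by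
        simpa [Matrix.trace, Matrix.diag] using norm_sum_le Finset.univ (fun i => A i i)
    _ ≤ ∑ _i : Fin n, ‖A‖ := Finset.sum_le_sum fun i _ => entry_le A i i
    _ = n * ‖A‖ := by simp [mul_comm]

lemma norm_star_eq (A : Mat) : ‖star A‖ = ‖A‖ := by
  rw [Matrix.star_eq_conjTranspose]
  exact Matrix.l2_opNorm_conjTranspose A

end LocalCocycle

namespace LocalCocycle
variable {n : ℕ}
local notation "Mat" => Matrix (Fin n) (Fin n) ℂ


lemma norm_term_le (m : Mat) (k : ℕ) :
    ‖((-1 : ℂ) ^ k / (k + 1) : ℂ) • (m - 1) ^ (k + 1)‖ ≤ ‖m - 1‖ ^ (k + 1) := by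
  rw [norm_smul]
  have h1 : ‖((-1 : ℂ) ^ k / (k + 1) : ℂ)‖ ≤ 1 := by
    have hk : ((k : ℂ) + 1) = ((k + 1 : ℕ) : ℂ) := by push_cast; ring
    rw [norm_div, norm_pow, norm_neg, norm_one, one_pow, hk, Complex.norm_natCast]
    rw [div_le_one (by positivity)]
    exact_mod_cast Nat.succ_le_succ (Nat.zero_le k)
  calc ‖((-1 : ℂ) ^ k / (k + 1) : ℂ)‖ * ‖(m - 1) ^ (k + 1)‖
      ≤ 1 * ‖m - 1‖ ^ (k + 1) :=
        mul_le_mul h1 (norm_pow_le' _ (Nat.succ_pos k)) (norm_nonneg _)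
          zero_le_one
    _ = ‖m - 1‖ ^ (k + 1) := one_mul _

lemma summable_geom_succ {r : ℝ} (h0 : 0 ≤ r) (h : r < 1) :
    Summable (fun k : ℕ => r ^ (k + 1)) := by
  simpa [pow_succ] using (summable_geometric_of_lt_one h0 h).mul_right r

lemma summable_mlog {m : Mat} (h : ‖m - 1‖ < 1) :
    Summable (fun k : ℕ => ((-1 : ℂ) ^ k / (k + 1) : ℂ) • (m - 1) ^ (k + 1)) := by
  refine Summable.of_norm (Summable.of_nonneg_of_le (fun k => norm_nonneg _)
    (fun k => norm_term_le m k) (summable_geom_succ (norm_nonneg _) h))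

noncomputable def traceCLM : Mat →L[ℂ] ℂ :=
  LinearMap.toContinuousLinearMap (Matrix.traceLinearMap (Fin n) ℂ ℂ)

@[simp] lemma traceCLM_apply (A : Mat) : traceCLM A = A.trace := rfl

lemma mlog_trace_eq {m : Mat} (h : ‖m - 1‖ < 1) :
    (mlog m).trace = ∑' k : ℕ, ((-1 : ℂ) ^ k / (k + 1) : ℂ) * ((m - 1) ^ (k + 1)).trace := by
  have := (traceCLM (n := n)).map_tsum (summable_mlog h)
  simpa [mlog, Matrix.trace_smul, smul_eq_mul] using this

end LocalCocycle

namespace LocalCocycle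
variable {n : ℕ}
local notation "Mat" => Matrix (Fin n) (Fin n) ℂ

lemma hasDerivAt_pow_mat {X : ℝ → Mat} {X' : Mat} {t : ℝ} (h : HasDerivAt X X' t) (j : ℕ) :
    HasDerivAt (fun s => (X s) ^ j)
      (∑ i ∈ Finset.range j, (X t) ^ i * X' * (X t) ^ (j - 1 - i)) t := by
  induction j with
  | zero => simpa using hasDerivAt_const t (1 : Mat)
  | succ j ih =>
      have := h.mul ih
      have heq : (fun s => X s * (X s) ^ j) = fun s => (X s) ^ (j + 1) := by
        funext s; rw [← pow_succ']
      change HasDerivAt (fun s => X s * (X s) ^ j) _ t at this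
      rw [heq] at this
      convert this using 1
      rw [Finset.sum_range_succ']
      simp only [pow_zero, one_mul, Nat.add_sub_cancel, Nat.sub_zero]
      rw [Finset.mul_sum]
      have : ∀ i ∈ Finset.range j, X t ^ (i+1) * X' * X t ^ (j - (i+1)) =
          X t * (X t ^ i * X' * X t ^ (j - 1 - i)) := by
        intro i hi
        rw [show j - (i+1) = j - 1 - i by omega, pow_succ']
        noncomm_ring
      rw [Finset.sum_congr rfl this]
      abel

lemma hasDerivAt_trace_pow {X : ℝ → Mat} {X' : Mat} {t : ℝ} (h : HasDerivAt X X' t) (j : ℕ) :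
    HasDerivAt (fun s => ((X s) ^ (j + 1)).trace)
      (((j : ℂ) + 1) * ((X t) ^ j * X').trace) t := by
  have h1 := ((traceCLM (n := n)).restrictScalars ℝ).hasFDerivAt.comp_hasDerivAt t
    (hasDerivAt_pow_mat h (j + 1))
  refine h1.congr_deriv (Eq.symm ?_)
  simp only [ContinuousLinearMap.coe_restrictScalars', traceCLM_apply, map_sum]
  have : ∀ i ∈ Finset.range (j + 1),
      ((X t) ^ i * X' * (X t) ^ (j + 1 - 1 - i)).trace = ((X t) ^ j * X').trace := by
    intro i hi
    rw [Finset.mem_range] at hi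
    rw [show j + 1 - 1 - i = j - i by omega, Matrix.trace_mul_comm, ← mul_assoc, ← pow_add,
      Nat.sub_add_cancel (by omega : i ≤ j)]
  rw [Finset.sum_congr rfl this, Finset.sum_const, Finset.card_range]
  simp [nsmul_eq_mul]

end LocalCocycle

namespace LocalCocycle
variable {n : ℕ}
local notation "Mat" => Matrix (Fin n) (Fin n) ℂ

lemma norm_pow_mul_le (A B : Mat) : ∀ k : ℕ, ‖A ^ k * B‖ ≤ ‖A‖ ^ k * ‖B‖
  | 0 => by simpa using le_refl ‖B‖
  | (k+1) => by
      calc ‖A ^ (k+1) * B‖ = ‖A * (A ^ k * B)‖ := by rw [pow_succ', mul_assoc]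
        _ ≤ ‖A‖ * ‖A ^ k * B‖ := norm_mul_le _ _
        _ ≤ ‖A‖ * (‖A‖ ^ k * ‖B‖) := by
            exact mul_le_mul_of_nonneg_left (norm_pow_mul_le A B k) (norm_nonneg _)
        _ = ‖A‖ ^ (k+1) * ‖B‖ := by rw [pow_succ']; ring

lemma hasDerivAt_trace_mlog {s : Set ℝ} (hs : IsOpen s) (hconn : IsPreconnected s)
    {m m' : ℝ → Mat} {r C : ℝ} (hr0 : 0 ≤ r) (hr : r < 1) (hC : 0 ≤ C)
    (hd : ∀ t ∈ s, HasDerivAt m (m' t) t)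
    (hnorm : ∀ t ∈ s, ‖m t - 1‖ ≤ r)
    (hCb : ∀ t ∈ s, ‖m' t‖ ≤ C)
    {t : ℝ} (ht : t ∈ s) :
    HasDerivAt (fun u => (mlog (m u)).trace) ((Ring.inverse (m t) * m' t).trace) t := by
  classical
  set g : ℕ → ℝ → ℂ := fun k u => ((-1 : ℂ) ^ k / (k + 1)) * ((m u - 1) ^ (k + 1)).trace with hg
  set g' : ℕ → ℝ → ℂ := fun k u => ((-1 : ℂ) ^ k) * (((m u - 1) ^ k) * m' u).trace with hg'
  have hck : ∀ k : ℕ, ((-1 : ℂ) ^ k / (k + 1)) * (k + 1) = (-1 : ℂ) ^ k := by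
    intro k
    exact div_mul_cancel₀ _ (Nat.cast_add_one_ne_zero k)
  have hder : ∀ k u, u ∈ s → HasDerivAt (g k) (g' k u) u := by
    intro k u hu
    have h1 := hasDerivAt_trace_pow (X := fun w => m w - 1) ((hd u hu).sub_const 1) k
    have h2 := h1.const_mul ((-1 : ℂ) ^ k / (k + 1))
    refine h2.congr_deriv (Eq.symm ?_)
    rw [hg']
    simp only
    rw [show ((-1 : ℂ) ^ k / (k + 1)) * (((k : ℂ) + 1) * (((m u - 1) ^ k * m' u).trace)) =
      (((-1 : ℂ) ^ k / (k + 1)) * ((k : ℂ) + 1)) * (((m u - 1) ^ k * m' u).trace) by ring,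
      hck k]
  have hbound : ∀ k u, u ∈ s → ‖g' k u‖ ≤ (n * C) * r ^ k := by
    intro k u hu
    rw [hg']
    simp only [norm_mul, norm_pow, norm_neg, norm_one, one_pow, one_mul]
    calc ‖(((m u - 1) ^ k) * m' u).trace‖ ≤ n * ‖((m u - 1) ^ k) * m' u‖ := trace_le _
      _ ≤ n * (‖m u - 1‖ ^ k * ‖m' u‖) := by
          exact mul_le_mul_of_nonneg_left (norm_pow_mul_le _ _ k) (Nat.cast_nonneg n)
      _ ≤ n * (r ^ k * C) := by
          refine mul_le_mul_of_nonneg_left ?_ (Nat.cast_nonneg n)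
          exact mul_le_mul (pow_le_pow_left₀ (norm_nonneg _) (hnorm u hu) k) (hCb u hu)
            (norm_nonneg _) (pow_nonneg hr0 k)
      _ = (n * C) * r ^ k := by ring
  have hsummable_u : Summable (fun k : ℕ => (n * C) * r ^ k) :=
    (summable_geometric_of_lt_one hr0 hr).mul_left _
  have hsum0 : Summable (fun k => g k t) := by
    refine Summable.of_norm (Summable.of_nonneg_of_le (fun k => norm_nonneg _) (fun k => ?_)
      ((summable_geom_succ hr0 hr).mul_left (n : ℝ)))
    rw [hg]
    simp only [norm_mul]
    have h1 : ‖((-1 : ℂ) ^ k / (k + 1) : ℂ)‖ ≤ 1 := by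
      have hk : ((k : ℂ) + 1) = ((k + 1 : ℕ) : ℂ) := by push_cast; ring
      rw [norm_div, norm_pow, norm_neg, norm_one, one_pow, hk, Complex.norm_natCast]
      rw [div_le_one (by positivity)]
      exact_mod_cast Nat.succ_le_succ (Nat.zero_le k)
    calc ‖((-1 : ℂ) ^ k / (k + 1) : ℂ)‖ * ‖((m t - 1) ^ (k + 1)).trace‖
        ≤ 1 * (n * ‖(m t - 1) ^ (k + 1)‖) :=
          mul_le_mul h1 (trace_le _) (norm_nonneg _) zero_le_one
      _ ≤ n * ‖m t - 1‖ ^ (k + 1) := by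
          rw [one_mul]
          exact mul_le_mul_of_nonneg_left (norm_pow_le' _ (Nat.succ_pos k)) (Nat.cast_nonneg n)
      _ ≤ n * r ^ (k + 1) := by
          exact mul_le_mul_of_nonneg_left (pow_le_pow_left₀ (norm_nonneg _) (hnorm t ht) _)
            (Nat.cast_nonneg n)
  have H := hasDerivAt_tsum_of_isPreconnected hsummable_u hs hconn hder hbound ht hsum0 ht
  have heq : (fun u => (mlog (m u)).trace) =ᶠ[nhds t] (fun u => ∑' k, g k u) := by
    filter_upwards [hs.mem_nhds ht] with u hu
    exact mlog_trace_eq (lt_of_le_of_lt (hnorm u hu) hr)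
  have H2 : HasDerivAt (fun u => (mlog (m u)).trace) (∑' k, g' k t) t :=
    H.congr_of_eventuallyEq heq
  convert H2 using 1
  -- identify the sum of derivatives
  set T : Mat := 1 - m t with hT
  have hTn : ‖T‖ < 1 := by
    rw [hT, norm_sub_rev]
    exact lt_of_le_of_lt (hnorm t ht) hr
  have hgeo : Summable (fun k : ℕ => T ^ k) :=
    summable_geometric_of_norm_lt_one hTn
  set Ψ : Mat →L[ℂ] ℂ := LinearMap.toContinuousLinearMap
    ((Matrix.traceLinearMap (Fin n) ℂ ℂ).comp (LinearMap.mulRight ℂ (m' t))) with hΨ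
  have hΨap : ∀ X : Mat, Ψ X = (X * m' t).trace := fun X => rfl
  have hterm : ∀ k : ℕ, g' k t = Ψ (T ^ k) := by
    intro k
    rw [hΨap, hg']
    simp only
    have : T ^ k = ((-1 : ℂ) ^ k) • (m t - 1) ^ k := by
      rw [hT, show (1 : Mat) - m t = (-1 : ℂ) • (m t - 1) by rw [neg_one_smul, neg_sub],
        smul_pow]
    rw [this, smul_mul_assoc, Matrix.trace_smul, smul_eq_mul]
  calc (Ring.inverse (m t) * m' t).trace = Ψ (Ring.inverse (m t)) := (hΨap _).symm
    _ = Ψ (∑' k : ℕ, T ^ k) := by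
        rw [geom_series_eq_inverse T hTn, hT, sub_sub_cancel]
    _ = ∑' k : ℕ, Ψ (T ^ k) := Ψ.map_tsum hgeo
    _ = ∑' k : ℕ, g' k t := by simp_rw [hterm]

end LocalCocycle

namespace LocalCocycle
variable {n : ℕ}
local notation "Mat" => Matrix (Fin n) (Fin n) ℂ

lemma mlog_one : mlog (1 : Mat) = 0 := by
  simp [mlog, zero_pow (Nat.succ_ne_zero _)]

lemma path_deriv (x : Mat) (t : ℝ) :
    HasDerivAt (fun w : ℝ => 1 + (w : ℂ) • (x - 1)) (x - 1) t := by
  have h1 : HasDerivAt (fun w : ℝ => (w : ℂ)) 1 t := by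
    exact Complex.ofRealCLM.hasDerivAt (x := t)
  simpa using (h1.smul_const (x - 1)).const_add 1

lemma path_sub_one (x : Mat) (t : ℝ) :
    ‖(1 + (t : ℂ) • (x - 1)) - 1‖ = |t| * ‖x - 1‖ := by
  rw [add_sub_cancel_left, norm_smul, Complex.norm_real, Real.norm_eq_abs]

lemma path_norm_le (hone : ‖(1 : Mat)‖ ≤ 1) {x : Mat} (hx1 : ‖x‖ ≤ 1) {rx : ℝ}
    (hrx : ‖x - 1‖ ≤ rx) {ε t : ℝ} (hε0 : 0 < ε) (ht : t ∈ Set.Ioo (-ε) (1 + ε)) :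
    ‖1 + (t : ℂ) • (x - 1)‖ ≤ 1 + ε * rx := by
  have hrx0 : 0 ≤ rx := le_trans (norm_nonneg _) hrx
  rcases le_total t 0 with h | h
  · calc ‖1 + (t : ℂ) • (x - 1)‖ ≤ ‖(1 : Mat)‖ + ‖(t : ℂ) • (x - 1)‖ := norm_add_le _ _
      _ ≤ 1 + ε * rx := by
          refine add_le_add hone ?_
          rw [norm_smul, Complex.norm_real, Real.norm_eq_abs]
          have : |t| ≤ ε := by rw [abs_le]; exact ⟨le_of_lt ht.1, le_trans h (le_of_lt hε0)⟩
          exact mul_le_mul this hrx (norm_nonneg _) (le_of_lt hε0)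
  · rcases le_total t 1 with h' | h'
    · have heq : 1 + (t : ℂ) • (x - 1) = ((1 - t : ℝ) : ℂ) • (1 : Mat) + (t : ℂ) • x := by
        push_cast
        module
      rw [heq]
      calc ‖((1 - t : ℝ) : ℂ) • (1 : Mat) + (t : ℂ) • x‖
          ≤ ‖((1 - t : ℝ) : ℂ) • (1 : Mat)‖ + ‖(t : ℂ) • x‖ := norm_add_le _ _
        _ ≤ (1 - t) * 1 + t * 1 := by
            rw [norm_smul, norm_smul, Complex.norm_real, Complex.norm_real,
              Real.norm_eq_abs, Real.norm_eq_abs, abs_of_nonneg (by linarith),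
              abs_of_nonneg h]
            exact add_le_add (mul_le_mul_of_nonneg_left hone (by linarith))
              (mul_le_mul_of_nonneg_left hx1 h)
        _ ≤ 1 + ε * rx := by nlinarith
    · have heq : 1 + (t : ℂ) • (x - 1) = x + ((t - 1 : ℝ) : ℂ) • (x - 1) := by
        push_cast
        module
      rw [heq]
      calc ‖x + ((t - 1 : ℝ) : ℂ) • (x - 1)‖ ≤ ‖x‖ + ‖((t - 1 : ℝ) : ℂ) • (x - 1)‖ :=
            norm_add_le _ _
        _ ≤ 1 + ε * rx := by
            refine add_le_add hx1 ?_
            rw [norm_smul, Complex.norm_real, Real.norm_eq_abs, abs_of_nonneg (by linarith)]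
            have ht1 : t - 1 ≤ ε := by linarith [ht.2]
            exact mul_le_mul ht1 hrx (norm_nonneg _) (le_of_lt hε0)

end LocalCocycle

namespace LocalCocycle
set_option maxHeartbeats 1000000
variable {n : ℕ}
local notation "Mat" => Matrix (Fin n) (Fin n) ℂ

lemma trace_mlog_mul (hone : ‖(1 : Mat)‖ ≤ 1) {d : ℝ} (hd : d ≤ 1 / 2) {u v : Mat}
    (hu1 : ‖u‖ ≤ 1) (hv1 : ‖v‖ ≤ 1) (hu : ‖u - 1‖ < d) (hv : ‖v - 1‖ < d) :
    (mlog (u * v)).trace = (mlog u).trace + (mlog v).trace := by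
  classical
  set r : ℝ := max ‖u - 1‖ ‖v - 1‖ with hrdef
  have hru : ‖u - 1‖ ≤ r := le_max_left _ _
  have hrv : ‖v - 1‖ ≤ r := le_max_right _ _
  have hr0 : 0 ≤ r := le_trans (norm_nonneg _) hru
  have hrd : r < d := max_lt hu hv
  have hr2 : 2 * r < 1 := by linarith
  set ε : ℝ := min 1 ((1 - 2 * r) / 2) with hεdef
  have hε0 : 0 < ε := lt_min one_pos (by linarith)
  have hε1 : ε ≤ 1 := min_le_left _ _
  have hε2 : ε ≤ (1 - 2 * r) / 2 := min_le_right _ _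
  set s : Set ℝ := Set.Ioo (-ε) (1 + ε) with hsdef
  have hsopen : IsOpen s := isOpen_Ioo
  have hsconn : IsPreconnected s := isPreconnected_Ioo
  have hIcc : Set.Icc (0 : ℝ) 1 ⊆ s := fun x hx =>
    ⟨by linarith [hx.1], by linarith [hx.2]⟩
  set Q : ℝ → Mat := fun t => 1 + (t : ℂ) • (u - 1) with hQdef
  set R : ℝ → Mat := fun t => 1 + (t : ℂ) • (v - 1) with hRdef
  set P : ℝ → Mat := fun t => Q t * R t with hPdef
  -- norms along paths
  have hQn : ∀ t ∈ s, ‖Q t‖ ≤ 1 + ε * r := fun t ht =>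
    path_norm_le hone hu1 hru hε0 ht
  have hRn : ∀ t ∈ s, ‖R t‖ ≤ 1 + ε * r := fun t ht =>
    path_norm_le hone hv1 hrv hε0 ht
  have habs : ∀ t ∈ s, |t| ≤ 1 + ε := by
    intro t ht
    rw [abs_le]
    exact ⟨by linarith [ht.1, hε0], le_of_lt ht.2⟩
  have hQs : ∀ t ∈ s, ‖Q t - 1‖ ≤ (1 + ε) * r := by
    intro t ht
    rw [hQdef]; rw [path_sub_one]
    exact mul_le_mul (habs t ht) hru (norm_nonneg _) (by linarith)
  have hRs : ∀ t ∈ s, ‖R t - 1‖ ≤ (1 + ε) * r := by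
    intro t ht
    rw [hRdef]; rw [path_sub_one]
    exact mul_le_mul (habs t ht) hrv (norm_nonneg _) (by linarith)
  have hεr2 : ε * r ≤ ε * (1 / 2) := mul_le_mul_of_nonneg_left (by linarith) hε0.le
  have hεr : ε * r ≤ 1 / 2 := by nlinarith
  have hεr0 : 0 ≤ ε * r := mul_nonneg hε0.le hr0
  have hA0 : (0:ℝ) ≤ 1 + ε * r := by linarith
  have hB0 : (0:ℝ) ≤ (1 + ε) * r := mul_nonneg (by linarith) hr0
  have hr₀0 : (0:ℝ) ≤ (1 + ε * r) * ((1 + ε) * r) + (1 + ε) * r :=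
    add_nonneg (mul_nonneg hA0 hB0) hB0
  have hrQlt : (1 + ε) * r < 1 := by nlinarith
  have h2 : (ε * r) * r ≤ (ε * r) * (1 / 2) := mul_le_mul_of_nonneg_left (by linarith) hεr0
  have h3 : (ε * r) * (ε * r) ≤ (ε * r) * (1 / 2) := mul_le_mul_of_nonneg_left hεr hεr0
  have hr₀lt : (1 + ε * r) * ((1 + ε) * r) + (1 + ε) * r < 1 := by
    nlinarith [hεr2, h2, h3, hε2, hr2, hr0, hε0.le]
  have hPs : ∀ t ∈ s, ‖P t - 1‖ ≤ (1 + ε * r) * ((1 + ε) * r) + (1 + ε) * r := by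
    intro t ht
    have hdecomp : P t - 1 = Q t * (R t - 1) + (Q t - 1) := by
      rw [hPdef]; simp only; noncomm_ring
    rw [hdecomp]
    calc ‖Q t * (R t - 1) + (Q t - 1)‖ ≤ ‖Q t * (R t - 1)‖ + ‖Q t - 1‖ := norm_add_le _ _
      _ ≤ ‖Q t‖ * ‖R t - 1‖ + ‖Q t - 1‖ := by
          exact add_le_add (norm_mul_le _ _) le_rfl
      _ ≤ (1 + ε * r) * ((1 + ε) * r) + (1 + ε) * r := by
          exact add_le_add (mul_le_mul (hQn t ht) (hRs t ht) (norm_nonneg _)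
            hA0) (hQs t ht)
  -- derivatives along paths
  have hQd : ∀ t ∈ s, HasDerivAt Q (u - 1) t := fun t _ => path_deriv u t
  have hRd : ∀ t ∈ s, HasDerivAt R (v - 1) t := fun t _ => path_deriv v t
  have hPd : ∀ t ∈ s, HasDerivAt P ((u - 1) * R t + Q t * (v - 1)) t := fun t ht =>
    (path_deriv u t).mul (path_deriv v t)
  have hC3Q : ∀ t ∈ s, ‖u - 1‖ ≤ (3 : ℝ) := fun t _ => by linarith
  have hC3R : ∀ t ∈ s, ‖v - 1‖ ≤ (3 : ℝ) := fun t _ => by linarith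
  have hC3P : ∀ t ∈ s, ‖(u - 1) * R t + Q t * (v - 1)‖ ≤ (3 : ℝ) := by
    intro t ht
    calc ‖(u - 1) * R t + Q t * (v - 1)‖ ≤ ‖(u - 1) * R t‖ + ‖Q t * (v - 1)‖ := norm_add_le _ _
      _ ≤ ‖u - 1‖ * ‖R t‖ + ‖Q t‖ * ‖v - 1‖ := add_le_add (norm_mul_le _ _) (norm_mul_le _ _)
      _ ≤ r * (1 + ε * r) + (1 + ε * r) * r := by
          refine add_le_add (mul_le_mul hru (hRn t ht) (norm_nonneg _) hr0)
            (mul_le_mul (hQn t ht) hrv (norm_nonneg _) hA0)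
      _ ≤ 3 := by nlinarith
  have HQ : ∀ t ∈ s, HasDerivAt (fun w => (mlog (Q w)).trace)
      ((Ring.inverse (Q t) * (u - 1)).trace) t := by
    intro t ht
    exact hasDerivAt_trace_mlog hsopen hsconn hB0 hrQlt (by norm_num : (0:ℝ) ≤ 3)
      hQd hQs hC3Q ht
  have HR : ∀ t ∈ s, HasDerivAt (fun w => (mlog (R w)).trace)
      ((Ring.inverse (R t) * (v - 1)).trace) t := by
    intro t ht
    exact hasDerivAt_trace_mlog hsopen hsconn hB0 hrQlt (by norm_num : (0:ℝ) ≤ 3)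
      hRd hRs hC3R ht
  have HP : ∀ t ∈ s, HasDerivAt (fun w => (mlog (P w)).trace)
      ((Ring.inverse (P t) * ((u - 1) * R t + Q t * (v - 1))).trace) t := by
    intro t ht
    exact hasDerivAt_trace_mlog hsopen hsconn hr₀0 hr₀lt (by norm_num : (0:ℝ) ≤ 3)
      hPd hPs hC3P ht
  -- the difference has zero derivative
  set g : ℝ → ℂ := fun t => (mlog (P t)).trace - (mlog (Q t)).trace - (mlog (R t)).trace
    with hgdef
  have hgd : ∀ t ∈ s, HasDerivAt g 0 t := by
    intro t ht
    have h := ((HP t ht).sub (HQ t ht)).sub (HR t ht)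
    have hz : (Ring.inverse (P t) * ((u - 1) * R t + Q t * (v - 1))).trace -
        (Ring.inverse (Q t) * (u - 1)).trace - (Ring.inverse (R t) * (v - 1)).trace = 0 := by
      have hQu : IsUnit (Q t) := by
        have : ‖(1 : Mat) - Q t‖ < 1 := by
          rw [norm_sub_rev]; exact lt_of_le_of_lt (hQs t ht) hrQlt
        simpa [sub_sub_cancel] using isUnit_one_sub_of_norm_lt_one this
      have hRu : IsUnit (R t) := by
        have : ‖(1 : Mat) - R t‖ < 1 := by
          rw [norm_sub_rev]; exact lt_of_le_of_lt (hRs t ht) hrQlt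
        simpa [sub_sub_cancel] using isUnit_one_sub_of_norm_lt_one this
      set q := hQu.unit with hq
      set w := hRu.unit with hw
      have hqv : (q : Mat) = Q t := hQu.unit_spec
      have hwv : (w : Mat) = R t := hRu.unit_spec
      have hinvQ : Ring.inverse (Q t) = ((q⁻¹ : (Mat)ˣ) : Mat) := by
        rw [← hqv, Ring.inverse_unit]
      have hinvR : Ring.inverse (R t) = ((w⁻¹ : (Mat)ˣ) : Mat) := by
        rw [← hwv, Ring.inverse_unit]
      have hinvP : Ring.inverse (P t) = ((w⁻¹ : (Mat)ˣ) : Mat) * ((q⁻¹ : (Mat)ˣ) : Mat) := by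
        have : P t = ((q * w : (Mat)ˣ) : Mat) := by
          rw [hPdef]; simp only [Units.val_mul, hqv, hwv]
        rw [this, Ring.inverse_unit, _root_.mul_inv_rev, Units.val_mul]
      rw [hinvP, hinvQ, hinvR]
      have hq1 : ((q⁻¹ : (Mat)ˣ) : Mat) * Q t = 1 := by rw [← hqv]; exact q.inv_mul
      have hw1 : R t * ((w⁻¹ : (Mat)ˣ) : Mat) = 1 := by rw [← hwv]; exact w.mul_inv
      rw [mul_add, Matrix.trace_add]
      have hterm2 : ((w⁻¹ : (Mat)ˣ) : Mat) * ((q⁻¹ : (Mat)ˣ) : Mat) * (Q t * (v - 1)) =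
          ((w⁻¹ : (Mat)ˣ) : Mat) * (v - 1) := by
        rw [mul_assoc, ← mul_assoc ((q⁻¹ : (Mat)ˣ) : Mat), hq1, one_mul]
      have hterm1 : (((w⁻¹ : (Mat)ˣ) : Mat) * ((q⁻¹ : (Mat)ˣ) : Mat) * ((u - 1) * R t)).trace =
          (((q⁻¹ : (Mat)ˣ) : Mat) * (u - 1)).trace := by
        have e1 : ((w⁻¹ : (Mat)ˣ) : Mat) * ((q⁻¹ : (Mat)ˣ) : Mat) * ((u - 1) * R t) =
            (((w⁻¹ : (Mat)ˣ) : Mat) * (((q⁻¹ : (Mat)ˣ) : Mat) * (u - 1))) * R t := by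
          noncomm_ring
        rw [e1, Matrix.trace_mul_comm, ← mul_assoc, ← mul_assoc, hw1, one_mul]
      rw [hterm1, hterm2]
      ring
    exact hz ▸ h
  have hconst := constant_of_has_deriv_right_zero
    (f := g) (a := (0:ℝ)) (b := 1)
    (fun x hx => ((hgd x (hIcc hx)).continuousAt).continuousWithinAt)
    (fun x hx => (hgd x (hIcc (Set.Ico_subset_Icc_self hx))).hasDerivWithinAt)
  have h10 := hconst 1 ⟨zero_le_one, le_refl 1⟩
  have hQ1 : Q 1 = u := by simp [hQdef]
  have hR1 : R 1 = v := by simp [hRdef]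
  have hQ0 : Q 0 = 1 := by simp [hQdef]
  have hR0 : R 0 = 1 := by simp [hRdef]
  have hP1 : P 1 = u * v := by simp only [hPdef]; rw [hQ1, hR1]
  have hP0 : P 0 = 1 := by simp only [hPdef]; rw [hQ0, hR0, one_mul]
  rw [hgdef] at h10
  simp only [hP1, hP0, hQ1, hQ0, hR1, hR0, mlog_one, Matrix.trace_zero] at h10
  linear_combination h10

end LocalCocycle

namespace LocalCocycle
variable {n : ℕ}
local notation "Mat" => Matrix (Fin n) (Fin n) ℂ

lemma trace_mlog_conj {g h x : Mat} (hgh : g * h = 1) (hhg : h * g = 1)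
    (hx : ‖x - 1‖ < 1) : (mlog (g * x * h)).trace = (mlog x).trace := by
  have key : ∀ k : ℕ, (g * x * h - 1) ^ (k + 1) = g * (x - 1) ^ (k + 1) * h := by
    intro k
    induction k with
    | zero =>
        rw [pow_one, pow_one, mul_sub, mul_one, sub_mul, hgh, mul_assoc]
    | succ k ih =>
        rw [pow_succ, ih, pow_succ]
        have h1 : g * x * h - 1 = g * (x - 1) * h := by
          rw [mul_sub, mul_one, sub_mul, hgh, mul_assoc]
        rw [h1]
        calc g * (x - 1) ^ (k + 1) * h * (g * (x - 1) * h)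
            = g * (x - 1) ^ (k + 1) * (h * g) * ((x - 1) * h) := by noncomm_ring
          _ = g * ((x - 1) ^ (k + 1) * (x - 1)) * h := by rw [hhg, mul_one]; noncomm_ring
  set Φ : Mat →L[ℂ] Mat := LinearMap.toContinuousLinearMap
    ((LinearMap.mulRight ℂ h).comp (LinearMap.mulLeft ℂ g)) with hΦ
  have hΦap : ∀ X : Mat, Φ X = g * X * h := fun X => rfl
  have hmm : mlog (g * x * h) = g * (mlog x) * h := by
    rw [mlog, mlog]
    calc (∑' k : ℕ, ((-1 : ℂ) ^ k / (k + 1)) • (g * x * h - 1) ^ (k + 1))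
        = ∑' k : ℕ, Φ (((-1 : ℂ) ^ k / (k + 1)) • (x - 1) ^ (k + 1)) := by
          congr 1
          funext k
          rw [key k, _root_.map_smul, hΦap]
      _ = Φ (∑' k : ℕ, ((-1 : ℂ) ^ k / (k + 1)) • (x - 1) ^ (k + 1)) :=
          (Φ.map_tsum (summable_mlog hx)).symm
      _ = g * (∑' k : ℕ, ((-1 : ℂ) ^ k / (k + 1)) • (x - 1) ^ (k + 1)) * h := hΦap _
  rw [hmm, Matrix.trace_mul_comm, ← mul_assoc, hhg, one_mul]

end LocalCocycle

section Main

open LocalCocycle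

set_option maxHeartbeats 1000000 in
/-- If `ρ : Γ → U(n)` is unital and `(S, δ)`-multiplicative with `δ ≤ 1/2`, then the local
2-cocycle `ω(a,b) = (1/2πi) Tr(log(ρ(a)ρ(b)ρ(ab)⁻¹))` satisfies the cocycle identity
`ω(a,b) + ω(ab,c) = ω(a,bc) + ω(b,c)` whenever `a, b, c, ab, bc ∈ S`. -/
theorem local_cocycle_identity {n : ℕ} {Γ : Type*} [Group Γ] (S : Set Γ) (δ : ℝ)
    (hδ : δ ≤ 1 / 2) (ρ : Γ → Matrix.unitaryGroup (Fin n) ℂ) (hρ1 : ρ 1 = 1)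
    (hmul : ∀ s ∈ S, ∀ t ∈ S,
      ‖((ρ (s * t) : Matrix (Fin n) (Fin n) ℂ) - (ρ s : Matrix (Fin n) (Fin n) ℂ) * ρ t)‖ < δ)
    (ω : Γ → Γ → ℂ)
    (hω : ∀ a b : Γ, ω a b = (1 / (2 * Real.pi * Complex.I)) *
      (mlog ((ρ a * ρ b * (ρ (a * b))⁻¹ : Matrix.unitaryGroup (Fin n) ℂ) :
        Matrix (Fin n) (Fin n) ℂ)).trace)
    {a b c : Γ} (ha : a ∈ S) (hb : b ∈ S) (hc : c ∈ S)
    (hab : a * b ∈ S) (hbc : b * c ∈ S) :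
    ω a b + ω (a * b) c = ω a (b * c) + ω b c := by
  classical
  rcases Nat.eq_zero_or_pos n with hn | hn
  · subst hn
    have hz : ∀ x y : Γ, ω x y = 0 := by
      intro x y
      rw [hω]
      have ht0 : (mlog ((ρ x * ρ y * (ρ (x * y))⁻¹ : Matrix.unitaryGroup (Fin 0) ℂ) :
          Matrix (Fin 0) (Fin 0) ℂ)).trace = 0 := by
        simp [Matrix.trace]
      rw [ht0, mul_zero]
    simp [hz]
  · haveI : Nonempty (Fin n) := ⟨⟨0, hn⟩⟩
    set γ1 : Matrix.unitaryGroup (Fin n) ℂ := ρ a * ρ b * (ρ (a * b))⁻¹ with hγ1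
    set γ2 : Matrix.unitaryGroup (Fin n) ℂ := ρ (a * b) * ρ c * (ρ (a * b * c))⁻¹ with hγ2
    set γ3 : Matrix.unitaryGroup (Fin n) ℂ := ρ a * ρ (b * c) * (ρ (a * b * c))⁻¹ with hγ3
    set γ4 : Matrix.unitaryGroup (Fin n) ℂ := ρ b * ρ c * (ρ (b * c))⁻¹ with hγ4
    set γ5 : Matrix.unitaryGroup (Fin n) ℂ := ρ a * γ4 * (ρ a)⁻¹ with hγ5
    set u1 : Matrix (Fin n) (Fin n) ℂ := (γ1 : Matrix (Fin n) (Fin n) ℂ) with hu1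
    set u2 : Matrix (Fin n) (Fin n) ℂ := (γ2 : Matrix (Fin n) (Fin n) ℂ) with hu2
    set u3 : Matrix (Fin n) (Fin n) ℂ := (γ3 : Matrix (Fin n) (Fin n) ℂ) with hu3
    set u4 : Matrix (Fin n) (Fin n) ℂ := (γ4 : Matrix (Fin n) (Fin n) ℂ) with hu4
    set u5 : Matrix (Fin n) (Fin n) ℂ := (γ5 : Matrix (Fin n) (Fin n) ℂ) with hu5
    have hms : ∀ x : Γ, (ρ x : Matrix (Fin n) (Fin n) ℂ) * star (ρ x : Matrix (Fin n) (Fin n) ℂ) = 1 :=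
      fun x => Unitary.mul_star_self_of_mem (ρ x).2
    have hsm : ∀ x : Γ, star (ρ x : Matrix (Fin n) (Fin n) ℂ) * (ρ x : Matrix (Fin n) (Fin n) ℂ) = 1 :=
      fun x => Unitary.star_mul_self_of_mem (ρ x).2
    have hUnorm : ∀ x : Γ, ‖(ρ x : Matrix (Fin n) (Fin n) ℂ)‖ = 1 :=
      fun x => CStarRing.norm_of_mem_unitary (ρ x).2
    have hone : ‖(1 : Matrix (Fin n) (Fin n) ℂ)‖ ≤ 1 := le_of_eq norm_one
    have hN1 : ‖u1‖ ≤ 1 := le_of_eq (CStarRing.norm_of_mem_unitary γ1.2)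
    have hN2 : ‖u2‖ ≤ 1 := le_of_eq (CStarRing.norm_of_mem_unitary γ2.2)
    have hN3 : ‖u3‖ ≤ 1 := le_of_eq (CStarRing.norm_of_mem_unitary γ3.2)
    have hN5 : ‖u5‖ ≤ 1 := le_of_eq (CStarRing.norm_of_mem_unitary γ5.2)
    -- explicit matrix forms
    have e1 : u1 = (ρ a : Matrix (Fin n) (Fin n) ℂ) * ρ b * star ((ρ (a * b) : Matrix (Fin n) (Fin n) ℂ)) := rfl
    have e2 : u2 = (ρ (a * b) : Matrix (Fin n) (Fin n) ℂ) * ρ c * star ((ρ (a * b * c) : Matrix (Fin n) (Fin n) ℂ)) := rfl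
    have e3 : u3 = (ρ a : Matrix (Fin n) (Fin n) ℂ) * ρ (b * c) * star ((ρ (a * b * c) : Matrix (Fin n) (Fin n) ℂ)) := rfl
    have e4 : u4 = (ρ b : Matrix (Fin n) (Fin n) ℂ) * ρ c * star ((ρ (b * c) : Matrix (Fin n) (Fin n) ℂ)) := rfl
    have e5 : u5 = (ρ a : Matrix (Fin n) (Fin n) ℂ) * u4 * star ((ρ a : Matrix (Fin n) (Fin n) ℂ)) := rfl
    -- distances to 1
    have hdist : ∀ (x y : Γ), x ∈ S → y ∈ S →
        ‖(ρ x : Matrix (Fin n) (Fin n) ℂ) * ρ y * star ((ρ (x * y) : Matrix (Fin n) (Fin n) ℂ)) - 1‖ < δ := by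
      intro x y hx hy
      have e : (ρ x : Matrix (Fin n) (Fin n) ℂ) * ρ y * star ((ρ (x * y) : Matrix (Fin n) (Fin n) ℂ)) - 1 =
          ((ρ x : Matrix (Fin n) (Fin n) ℂ) * ρ y - ρ (x * y)) * star ((ρ (x * y) : Matrix (Fin n) (Fin n) ℂ)) := by
        rw [sub_mul, hms (x * y)]
      rw [e]
      calc ‖((ρ x : Matrix (Fin n) (Fin n) ℂ) * ρ y - ρ (x * y)) * star ((ρ (x * y) : Matrix (Fin n) (Fin n) ℂ))‖
          ≤ ‖(ρ x : Matrix (Fin n) (Fin n) ℂ) * ρ y - ρ (x * y)‖ * ‖star ((ρ (x * y) : Matrix (Fin n) (Fin n) ℂ))‖ :=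
            norm_mul_le _ _
        _ = ‖(ρ (x * y) : Matrix (Fin n) (Fin n) ℂ) - ρ x * ρ y‖ := by
            rw [LocalCocycle.norm_star_eq, hUnorm, mul_one, norm_sub_rev]
        _ < δ := hmul x hx y hy
    have hn1 : ‖u1 - 1‖ < δ := by rw [e1]; exact hdist a b ha hb
    have hn2 : ‖u2 - 1‖ < δ := by rw [e2]; exact hdist (a * b) c hab hc
    have hn3 : ‖u3 - 1‖ < δ := by
      rw [e3]
      have := hdist a (b * c) ha hbc
      rwa [← mul_assoc a b c] at this
    have hn4 : ‖u4 - 1‖ < δ := by rw [e4]; exact hdist b c hb hc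
    have hn5 : ‖u5 - 1‖ < δ := by
      have e : u5 - 1 = (ρ a : Matrix (Fin n) (Fin n) ℂ) * (u4 - 1) * star ((ρ a : Matrix (Fin n) (Fin n) ℂ)) := by
        rw [mul_sub, mul_one, sub_mul, hms a, e5]
      rw [e]
      calc ‖(ρ a : Matrix (Fin n) (Fin n) ℂ) * (u4 - 1) * star ((ρ a : Matrix (Fin n) (Fin n) ℂ))‖
          ≤ ‖(ρ a : Matrix (Fin n) (Fin n) ℂ) * (u4 - 1)‖ * ‖star ((ρ a : Matrix (Fin n) (Fin n) ℂ))‖ :=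
            norm_mul_le _ _
        _ ≤ ‖(ρ a : Matrix (Fin n) (Fin n) ℂ)‖ * ‖u4 - 1‖ * ‖star ((ρ a : Matrix (Fin n) (Fin n) ℂ))‖ := by
            exact mul_le_mul_of_nonneg_right (norm_mul_le _ _) (norm_nonneg _)
        _ = ‖u4 - 1‖ := by rw [LocalCocycle.norm_star_eq, hUnorm, one_mul, mul_one]
        _ < δ := hn4
    -- group identity
    have hgrp : γ1 * γ2 = γ5 * γ3 := by
      simp only [hγ1, hγ2, hγ3, hγ4, hγ5]
      group
    have hmat : u1 * u2 = u5 * u3 :=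
      congrArg (fun z : Matrix.unitaryGroup (Fin n) ℂ => (z : Matrix (Fin n) (Fin n) ℂ)) hgrp
    -- trace identities
    have t12 : (mlog (u1 * u2)).trace = (mlog u1).trace + (mlog u2).trace :=
      trace_mlog_mul hone hδ hN1 hN2 hn1 hn2
    have t53 : (mlog (u5 * u3)).trace = (mlog u5).trace + (mlog u3).trace :=
      trace_mlog_mul hone hδ hN5 hN3 hn5 hn3
    have t5 : (mlog u5).trace = (mlog u4).trace := by
      rw [e5]
      exact trace_mlog_conj (hms a) (hsm a) (hn4.trans_le (hδ.trans (by norm_num)))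
    have key : (mlog u1).trace + (mlog u2).trace = (mlog u3).trace + (mlog u4).trace := by
      rw [← t12, hmat, t53, t5]
      ring
    rw [hω a b, hω (a * b) c, hω a (b * c), hω b c, ← mul_assoc a b c]
    have r1 : ((ρ a * ρ b * (ρ (a * b))⁻¹ : Matrix.unitaryGroup (Fin n) ℂ) :
        Matrix (Fin n) (Fin n) ℂ) = u1 := rfl
    have r2 : ((ρ (a * b) * ρ c * (ρ (a * b * c))⁻¹ : Matrix.unitaryGroup (Fin n) ℂ) :
        Matrix (Fin n) (Fin n) ℂ) = u2 := rfl
    have r3 : ((ρ a * ρ (b * c) * (ρ (a * b * c))⁻¹ : Matrix.unitaryGroup (Fin n) ℂ) :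
        Matrix (Fin n) (Fin n) ℂ) = u3 := rfl
    have r4 : ((ρ b * ρ c * (ρ (b * c))⁻¹ : Matrix.unitaryGroup (Fin n) ℂ) :
        Matrix (Fin n) (Fin n) ℂ) = u4 := rfl
    rw [r1, r2, r3, r4]
    linear_combination (1 / (2 * Real.pi * Complex.I)) * key

end Main
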